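/- Let f be a homeomorphism of a compact metric space M with two fixed points p₁ (a 'repeller') and p₂ (an 'attractor'), and assume there is a nonempty open set V ⊆ M such that fⁿ(x) → p₂ and f⁻ⁿ(x) → p₁ uniformly on V as n → ∞. Then for every ε > 0 there is a nonempty open subset V_ε ⊆ V such that d(fⁿ(x), fⁿ(y)) < ε for all x, y ∈ V_ε and all n ∈ ℤ. In particular f does not have sensitivity to initial conditions. -/

import Mathlib

lemma cont_pow {M : Type*} [TopologicalSpace M] (g : M ≃ₜ M) (m : ℕ) :
    Continuous fun x => (g.toEquiv ^ m) x := by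
  induction m with
  | zero => simpa using continuous_id'
  | succ m ih =>
    have : (fun x => (g.toEquiv ^ (m+1)) x) = fun x => (g.toEquiv ^ m) (g x) := by
      funext x; rw [pow_succ]; rfl
    rw [this]; exact ih.comp g.continuous

lemma cont_zpow {M : Type*} [TopologicalSpace M] (g : M ≃ₜ M) (n : ℤ) :
    Continuous fun x => (g.toEquiv ^ n) x := by
  obtain ⟨m, rfl | rfl⟩ := n.eq_nat_or_neg
  · rw [zpow_natCast]; exact cont_pow g m
  · have h : g.toEquiv ^ (-(m:ℤ)) = g.symm.toEquiv ^ m := by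
      rw [zpow_neg, zpow_natCast, ← inv_pow]; rfl
    rw [h]; exact cont_pow g.symm m

theorem stmt_10 {M : Type*} [MetricSpace M] [CompactSpace M]
    (f : M ≃ₜ M) (p₁ p₂ : M) (hp₁ : f p₁ = p₁) (hp₂ : f p₂ = p₂)
    (V : Set M) (hVo : IsOpen V) (hVne : V.Nonempty)
    (hconv : ∀ ε > (0:ℝ), ∃ k : ℕ, 1 ≤ k ∧ ∀ j : ℕ, k ≤ j → ∀ x ∈ V,
      dist ((f.toEquiv ^ (j : ℤ)) x) p₂ < ε ∧
      dist ((f.toEquiv ^ (-(j : ℤ))) x) p₁ < ε) :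
    (∀ ε > (0:ℝ), ∃ Vε : Set M, Vε ⊆ V ∧ IsOpen Vε ∧ Vε.Nonempty ∧
      ∀ x ∈ Vε, ∀ y ∈ Vε, ∀ n : ℤ,
        dist ((f.toEquiv ^ n) x) ((f.toEquiv ^ n) y) < ε) ∧
    ¬ (∃ ε > (0:ℝ), ∀ x : M, ∀ δ > (0:ℝ), ∃ y : M, dist x y < δ ∧
        ∃ k : ℤ, ε < dist ((f.toEquiv ^ k) x) ((f.toEquiv ^ k) y)) := by
  have main : ∀ ε > (0:ℝ), ∃ Vε : Set M, Vε ⊆ V ∧ IsOpen Vε ∧ Vε.Nonempty ∧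
      ∀ x ∈ Vε, ∀ y ∈ Vε, ∀ n : ℤ,
        dist ((f.toEquiv ^ n) x) ((f.toEquiv ^ n) y) < ε := by
    intro ε hε
    obtain ⟨k, hk1, hk⟩ := hconv (ε/2) (by linarith)
    obtain ⟨x₀, hx₀⟩ := hVne
    set Vε : Set M := V ∩ ⋂ n ∈ Finset.Icc (-(k:ℤ)) (k:ℤ),
      (fun x => (f.toEquiv ^ n) x) ⁻¹' Metric.ball ((f.toEquiv ^ n) x₀) (ε/2) with hVεdef
    have hVεo : IsOpen Vε := by
      apply hVo.inter
      apply isOpen_biInter_finset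
      intro n _
      exact Metric.isOpen_ball.preimage (cont_zpow f n)
    have hx₀mem : x₀ ∈ Vε := by
      refine ⟨hx₀, ?_⟩
      simp only [Set.mem_iInter]
      intro n _
      simp [Metric.mem_ball, hε]
    refine ⟨Vε, Set.inter_subset_left, hVεo, ⟨x₀, hx₀mem⟩, ?_⟩
    rintro x ⟨hxV, hx⟩ y ⟨hyV, hy⟩ n
    simp only [Set.mem_iInter, Set.mem_preimage, Metric.mem_ball] at hx hy
    by_cases hn : n ∈ Finset.Icc (-(k:ℤ)) (k:ℤ)
    · have h1 := hx n hn
      have h2 := hy n hn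
      calc dist ((f.toEquiv ^ n) x) ((f.toEquiv ^ n) y)
          ≤ dist ((f.toEquiv ^ n) x) ((f.toEquiv ^ n) x₀)
            + dist ((f.toEquiv ^ n) x₀) ((f.toEquiv ^ n) y) := dist_triangle _ _ _
        _ < ε/2 + ε/2 := by have hc := dist_comm ((f.toEquiv ^ n) x₀) ((f.toEquiv ^ n) y); linarith
        _ = ε := by ring
    · simp only [Finset.mem_Icc, not_and_or, not_le] at hn
      rcases hn with hn | hn
      · -- n < -k
        set j : ℕ := (-n).toNat with hj
        have hjn : n = -(j:ℤ) := by omega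
        have hjk : k ≤ j := by omega
        have h1 := (hk j hjk x hxV).2
        have h2 := (hk j hjk y hyV).2
        rw [hjn]
        calc dist ((f.toEquiv ^ (-(j:ℤ))) x) ((f.toEquiv ^ (-(j:ℤ))) y)
            ≤ dist ((f.toEquiv ^ (-(j:ℤ))) x) p₁ + dist p₁ ((f.toEquiv ^ (-(j:ℤ))) y) :=
              dist_triangle _ _ _
          _ < ε/2 + ε/2 := by rw [dist_comm p₁]; linarith
          _ = ε := by ring
      · set j : ℕ := n.toNat with hj
        have hjn : n = (j:ℤ) := by omega
        have hjk : k ≤ j := by omega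
        have h1 := (hk j hjk x hxV).1
        have h2 := (hk j hjk y hyV).1
        rw [hjn]
        calc dist ((f.toEquiv ^ (j:ℤ)) x) ((f.toEquiv ^ (j:ℤ)) y)
            ≤ dist ((f.toEquiv ^ (j:ℤ)) x) p₂ + dist p₂ ((f.toEquiv ^ (j:ℤ)) y) :=
              dist_triangle _ _ _
          _ < ε/2 + ε/2 := by rw [dist_comm p₂]; linarith
          _ = ε := by ring
  refine ⟨main, ?_⟩
  rintro ⟨ε, hε, hsens⟩
  obtain ⟨Vε, hVεV, hVεo, ⟨x, hx⟩, hVε⟩ := main ε hε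
  obtain ⟨δ, hδ, hball⟩ := Metric.isOpen_iff.mp hVεo x hx
  obtain ⟨y, hxy, kk, hkk⟩ := hsens x δ hδ
  have hy : y ∈ Vε := hball (by rwa [Metric.mem_ball, dist_comm])
  exact absurd (hVε x hx y hy kk) (not_lt.mpr hkk.le)
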